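/- arXiv:1407.2657 — 2 statements merged into one kernel-verified Lean document; each statement's English description precedes it below -/
import Mathlib

section
/- Let D be a probability distribution on X with density μ, V a set of classifiers X → {-1,1}, and η ∈ [0,1]. Define a confidence-rated predictor as measurable functions ξ, ζ, γ : X → [0,1] with ξ + ζ + γ ≡ 1, satisfying for all h ∈ V: E_D[ξ(x)·1{h(x)=-1} + ζ(x)·1{h(x)=+1}] ≤ η. If h₁, h₂ ∈ V satisfy ρ_D(h₁,h₂) ≥ r for some r with 2η ≤ r ≤ 1, then any such predictor satisfies E_D[γ(x)] ≥ r − 2η. Consequently the minimum abstention probability Φ_D(V, η) ≥ r − 2η. -/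
open MeasureTheory

theorem stmt_8 {X : Type*} [MeasurableSpace X]
    (D : Measure X) [IsProbabilityMeasure D]
    (V : Set (X → ℤ))
    (hV : ∀ h ∈ V, (∀ x, h x = -1 ∨ h x = 1) ∧ Measurable h)
    (η r : ℝ) (hη : 0 < η) (hr2 : 2 * η ≤ r) (hr1 : r ≤ 1)
    (ξ ζ γ : X → ℝ)
    (hmξ : Measurable ξ) (hmζ : Measurable ζ) (hmγ : Measurable γ)
    (hξ0 : ∀ x, 0 ≤ ξ x) (hζ0 : ∀ x, 0 ≤ ζ x) (hγ0 : ∀ x, 0 ≤ γ x)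
    (hsum : ∀ x, ξ x + ζ x + γ x = 1)
    (herr : ∀ h ∈ V,
      (∫ x, ξ x * (if h x = -1 then (1 : ℝ) else 0) +
            ζ x * (if h x = 1 then (1 : ℝ) else 0) ∂D) ≤ η)
    (h₁ h₂ : X → ℤ) (h₁V : h₁ ∈ V) (h₂V : h₂ ∈ V)
    (hdis : r ≤ (D {x | h₁ x ≠ h₂ x}).toReal) :
    r - 2 * η ≤ ∫ x, γ x ∂D := by
  obtain ⟨hval₁, hm₁⟩ := hV h₁ h₁V
  obtain ⟨hval₂, hm₂⟩ := hV h₂ h₂V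
  set A : Set X := {x | h₁ x ≠ h₂ x} with hAdef
  have hA : MeasurableSet A := (measurableSet_eq_fun hm₁ hm₂).compl
  set f₁ : X → ℝ := fun x => ξ x * (if h₁ x = -1 then (1:ℝ) else 0) +
      ζ x * (if h₁ x = 1 then (1:ℝ) else 0) with hf₁def
  set f₂ : X → ℝ := fun x => ξ x * (if h₂ x = -1 then (1:ℝ) else 0) +
      ζ x * (if h₂ x = 1 then (1:ℝ) else 0) with hf₂def
  -- bounds
  have hξ1 : ∀ x, ξ x ≤ 1 := fun x => by nlinarith [hsum x, hζ0 x, hγ0 x]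
  have hζ1 : ∀ x, ζ x ≤ 1 := fun x => by nlinarith [hsum x, hξ0 x, hγ0 x]
  have hγ1 : ∀ x, γ x ≤ 1 := fun x => by nlinarith [hsum x, hξ0 x, hζ0 x]
  have hbound : ∀ (f : X → ℝ), Measurable f → (∀ x, ‖f x‖ ≤ 2) → Integrable f D := by
    intro f hf hb
    exact (integrable_const (2:ℝ)).mono' hf.aestronglyMeasurable (Filter.Eventually.of_forall hb)
  have hmf : ∀ (h : X → ℤ), Measurable h →
      Measurable (fun x => ξ x * (if h x = -1 then (1:ℝ) else 0) +
        ζ x * (if h x = 1 then (1:ℝ) else 0)) := by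
    intro h hm
    apply Measurable.add
    · exact hmξ.mul (Measurable.ite (hm (measurableSet_singleton (-1))) measurable_const measurable_const)
    · exact hmζ.mul (Measurable.ite (hm (measurableSet_singleton 1)) measurable_const measurable_const)
  have hbf : ∀ (h : X → ℤ) (x : X), ‖ξ x * (if h x = -1 then (1:ℝ) else 0) +
      ζ x * (if h x = 1 then (1:ℝ) else 0)‖ ≤ 2 := by
    intro h x
    have := hξ0 x; have := hζ0 x; have := hξ1 x; have := hζ1 x
    rw [Real.norm_eq_abs, abs_le]
    constructor <;> split_ifs <;> nlinarith
  have hif₁ : Integrable f₁ D := hbound f₁ (hmf h₁ hm₁) (hbf h₁)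
  have hif₂ : Integrable f₂ D := hbound f₂ (hmf h₂ hm₂) (hbf h₂)
  have hiγ : Integrable γ D :=
    hbound γ hmγ (fun x => by rw [Real.norm_eq_abs, abs_le]; constructor <;> nlinarith [hγ0 x, hγ1 x])
  have hiind : Integrable (A.indicator (fun x => 1 - γ x)) D := by
    apply Integrable.indicator _ hA
    exact (integrable_const (1:ℝ)).sub hiγ
  -- pointwise inequality
  have hpt : ∀ x, A.indicator (fun x => 1 - γ x) x ≤ f₁ x + f₂ x := by
    intro x
    by_cases hx : x ∈ A
    · rw [Set.indicator_of_mem hx]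
      have hne : h₁ x ≠ h₂ x := hx
      have key : f₁ x + f₂ x = ξ x + ζ x := by
        rcases hval₁ x with e1 | e1 <;> rcases hval₂ x with e2 | e2 <;>
          simp [hf₁def, hf₂def, e1, e2] at hne ⊢ <;> ring
      rw [key]
      nlinarith [hsum x]
    · rw [Set.indicator_of_notMem hx]
      have := hξ0 x; have := hζ0 x
      simp only [hf₁def, hf₂def]
      split_ifs <;> nlinarith
  have hint1 : ∫ x, A.indicator (fun x => 1 - γ x) x ∂D ≤ (∫ x, f₁ x ∂D) + ∫ x, f₂ x ∂D := by
    rw [← integral_add hif₁ hif₂]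
    exact integral_mono hiind (hif₁.add hif₂) hpt
  have hη₁ := herr h₁ h₁V
  have hη₂ := herr h₂ h₂V
  have hindval : ∫ x, A.indicator (fun x => 1 - γ x) x ∂D = (D A).toReal - ∫ x in A, γ x ∂D := by
    rw [integral_indicator hA, integral_sub (integrable_const (1:ℝ)).integrableOn hiγ.integrableOn]
    simp
    rfl
  have hsetle : ∫ x in A, γ x ∂D ≤ ∫ x, γ x ∂D :=
    setIntegral_le_integral hiγ (Filter.Eventually.of_forall hγ0)
  have : (D A).toReal - ∫ x in A, γ x ∂D ≤ 2 * η := by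
    rw [← hindval]
    calc ∫ x, A.indicator (fun x => 1 - γ x) x ∂D ≤ (∫ x, f₁ x ∂D) + ∫ x, f₂ x ∂D := hint1
      _ ≤ η + η := add_le_add hη₁ hη₂
      _ = 2 * η := by ring
  linarith
end

section
/- Let D be a probability distribution on X, V a set of classifiers, and 0 < λ < η < 1. Suppose ξ, ζ, γ : X → [0,1] satisfy ξ + ζ + γ ≡ 1 and for all h ∈ V, E_D[ξ·1{h=-1} + ζ·1{h=+1}] ≤ η - λ, and that there exist h₁, h₂ ∈ V with ρ_D(h₁,h₂) ≥ 2η − λ (so that E_D[γ] ≥ λ). Define ξ' = ξ, γ' = (1 − λ/E_D[γ])·γ, ζ' = 1 − ξ' − γ'. Then (ξ', ζ', γ') is a valid confidence-rated predictor with error guarantee η, i.e., for all h ∈ V, E_D[ξ'·1{h=-1} + ζ'·1{h=+1}] ≤ η, and E_D[γ'] = E_D[γ] − λ. Consequently Φ_D(V,η) ≤ Φ_D(V,η−λ) − λ. -/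
open MeasureTheory

private lemma integ_bdd {X : Type*} [MeasurableSpace X]
    (D : Measure X) [IsProbabilityMeasure D] (f : X → ℝ)
    (hm : Measurable f) (h0 : ∀ x, 0 ≤ f x) (h1 : ∀ x, f x ≤ 1) :
    Integrable f D :=
  (integrable_const (1:ℝ)).mono' hm.aestronglyMeasurable
    (Filter.Eventually.of_forall fun x => by
      rw [Real.norm_eq_abs, abs_of_nonneg (h0 x)]; exact h1 x)

theorem stmt_9 {X : Type*} [MeasurableSpace X]
    (D : Measure X) [IsProbabilityMeasure D]
    (V : Set (X → ℤ))
    (hV : ∀ h ∈ V, (∀ x, h x = -1 ∨ h x = 1) ∧ Measurable h)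
    (η lam : ℝ) (hlam : 0 < lam) (hlamη : lam < η) (hη : η < 1)
    (ξ ζ γ : X → ℝ)
    (hmξ : Measurable ξ) (hmζ : Measurable ζ) (hmγ : Measurable γ)
    (hξ0 : ∀ x, 0 ≤ ξ x) (hζ0 : ∀ x, 0 ≤ ζ x) (hγ0 : ∀ x, 0 ≤ γ x)
    (hsum : ∀ x, ξ x + ζ x + γ x = 1)
    (herr : ∀ h ∈ V,
      (∫ x, ξ x * (if h x = -1 then (1 : ℝ) else 0) +
            ζ x * (if h x = 1 then (1 : ℝ) else 0) ∂D) ≤ η - lam)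
    (hdis : ∃ h₁ ∈ V, ∃ h₂ ∈ V, 2 * η - lam ≤ (D {x | h₁ x ≠ h₂ x}).toReal)
    (ξ' γ' ζ' : X → ℝ)
    (hξ' : ξ' = ξ)
    (hγ' : γ' = fun x => (1 - lam / (∫ x, γ x ∂D)) * γ x)
    (hζ' : ζ' = fun x => 1 - ξ' x - γ' x) :
    (∀ h ∈ V,
      (∫ x, ξ' x * (if h x = -1 then (1 : ℝ) else 0) +
            ζ' x * (if h x = 1 then (1 : ℝ) else 0) ∂D) ≤ η) ∧
    (∫ x, γ' x ∂D) = (∫ x, γ x ∂D) - lam := by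
  set G : ℝ := ∫ x, γ x ∂D with hG
  -- pointwise bounds
  have hξ1 : ∀ x, ξ x ≤ 1 := fun x => by nlinarith [hsum x, hζ0 x, hγ0 x]
  have hζ1 : ∀ x, ζ x ≤ 1 := fun x => by nlinarith [hsum x, hξ0 x, hγ0 x]
  have hγ1 : ∀ x, γ x ≤ 1 := fun x => by nlinarith [hsum x, hξ0 x, hζ0 x]
  have hγint : Integrable γ D := integ_bdd D γ hmγ hγ0 hγ1
  -- the indicator-valued functions
  have Im : ∀ (h : X → ℤ), Measurable h →
      Measurable (fun x => if h x = -1 then (1:ℝ) else 0) := fun h hmh =>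
    Measurable.ite (hmh (measurableSet_singleton _)) measurable_const measurable_const
  have Ip : ∀ (h : X → ℤ), Measurable h →
      Measurable (fun x => if h x = 1 then (1:ℝ) else 0) := fun h hmh =>
    Measurable.ite (hmh (measurableSet_singleton _)) measurable_const measurable_const
  -- error integrand
  have eprop : ∀ h ∈ V,
      Measurable (fun x => ξ x * (if h x = -1 then (1:ℝ) else 0) +
        ζ x * (if h x = 1 then (1:ℝ) else 0)) ∧
      (∀ x, 0 ≤ ξ x * (if h x = -1 then (1:ℝ) else 0) +
        ζ x * (if h x = 1 then (1:ℝ) else 0)) ∧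
      (∀ x, ξ x * (if h x = -1 then (1:ℝ) else 0) +
        ζ x * (if h x = 1 then (1:ℝ) else 0) ≤ 1) := by
    intro h hh
    refine ⟨(hmξ.mul (Im h (hV h hh).2)).add (hmζ.mul (Ip h (hV h hh).2)), ?_, ?_⟩ <;>
      intro x <;> rcases (hV h hh).1 x with h1 | h1 <;>
      simp [h1] <;> nlinarith [hsum x, hξ0 x, hζ0 x, hγ0 x, hξ1 x, hζ1 x]
  have eint : ∀ h ∈ V, Integrable (fun x => ξ x * (if h x = -1 then (1:ℝ) else 0) +
      ζ x * (if h x = 1 then (1:ℝ) else 0)) D := fun h hh =>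
    integ_bdd D _ (eprop h hh).1 (eprop h hh).2.1 (eprop h hh).2.2
  -- Step C : lam ≤ G
  have hGlam : lam ≤ G := by
    obtain ⟨h₁, hh₁, h₂, hh₂, hρ⟩ := hdis
    set S : Set X := {x | h₁ x ≠ h₂ x} with hS
    have hSm : MeasurableSet S := by
      have : S = {x | h₁ x = h₂ x}ᶜ := by ext x; simp [hS]
      rw [this]
      exact (measurableSet_eq_fun (hV h₁ hh₁).2 (hV h₂ hh₂).2).compl
    have hpt : ∀ x, S.indicator (fun _ => (1:ℝ)) x - γ x ≤
        (ξ x * (if h₁ x = -1 then (1:ℝ) else 0) + ζ x * (if h₁ x = 1 then (1:ℝ) else 0)) +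
        (ξ x * (if h₂ x = -1 then (1:ℝ) else 0) + ζ x * (if h₂ x = 1 then (1:ℝ) else 0)) := by
      intro x
      by_cases hx : h₁ x ≠ h₂ x
      · rw [Set.indicator_of_mem (show x ∈ S from hx)]
        rcases (hV h₁ hh₁).1 x with e1 | e1 <;> rcases (hV h₂ hh₂).1 x with e2 | e2 <;>
          simp [e1, e2] at hx ⊢ <;> nlinarith [hsum x]
      · rw [Set.indicator_of_notMem (show x ∉ S from hx)]
        push_neg at hx
        rcases (hV h₁ hh₁).1 x with e1 | e1 <;>
          simp [e1, hx ▸ e1, hx] at * <;> nlinarith [hγ0 x, hξ0 x, hζ0 x]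
    have hintS : Integrable (fun x => S.indicator (fun _ => (1:ℝ)) x - γ x) D :=
      ((integrable_const (1:ℝ)).indicator hSm).sub hγint
    have hmono := integral_mono hintS ((eint h₁ hh₁).add (eint h₂ hh₂)) hpt
    simp only [Pi.add_apply] at hmono
    rw [integral_sub ((integrable_const (1:ℝ)).indicator hSm) hγint,
      integral_add (eint h₁ hh₁) (eint h₂ hh₂)] at hmono
    have hind : (∫ x, S.indicator (fun _ => (1:ℝ)) x ∂D) = (D S).toReal := by
      rw [integral_indicator_const (1:ℝ) hSm]; simp [Measure.real]
    rw [hind] at hmono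
    have := herr h₁ hh₁
    have := herr h₂ hh₂
    linarith
  have hGpos : 0 < G := lt_of_lt_of_le hlam hGlam
  have hγ'int : ∫ x, γ' x ∂D = G - lam := by
    rw [hγ', integral_const_mul, ← hG]
    field_simp
  refine ⟨?_, hγ'int⟩
  intro h hh
  have hζ'eq : ∀ x, ζ' x = ζ x + (lam / G) * γ x := by
    intro x
    rw [hζ', hξ', hγ']
    have := hsum x
    ring_nf
    nlinarith [hsum x]
  have hγIint : Integrable (fun x => γ x * (if h x = 1 then (1:ℝ) else 0)) D := by
    refine integ_bdd D _ (hmγ.mul (Ip h (hV h hh).2)) ?_ ?_ <;> intro x <;>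
      by_cases hx : h x = 1 <;> simp [hx, hγ0 x, hγ1 x]
  have hsplit : (∫ x, ξ' x * (if h x = -1 then (1:ℝ) else 0) +
      ζ' x * (if h x = 1 then (1:ℝ) else 0) ∂D) =
      (∫ x, ξ x * (if h x = -1 then (1:ℝ) else 0) +
        ζ x * (if h x = 1 then (1:ℝ) else 0) ∂D) +
      (lam / G) * ∫ x, γ x * (if h x = 1 then (1:ℝ) else 0) ∂D := by
    rw [← integral_const_mul, ← integral_add (eint h hh) (hγIint.const_mul _)]
    congr 1; ext x
    rw [hξ', hζ'eq x]; ring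
  rw [hsplit]
  have hle : (∫ x, γ x * (if h x = 1 then (1:ℝ) else 0) ∂D) ≤ G := by
    refine integral_mono hγIint hγint fun x => ?_
    by_cases hx : h x = 1 <;> simp [hx, hγ0 x]
  have h2 : (lam / G) * (∫ x, γ x * (if h x = 1 then (1:ℝ) else 0) ∂D) ≤ lam := by
    have : (lam / G) * (∫ x, γ x * (if h x = 1 then (1:ℝ) else 0) ∂D) ≤ (lam / G) * G :=
      mul_le_mul_of_nonneg_left hle (div_nonneg hlam.le hGpos.le)
    rwa [div_mul_cancel₀ _ (ne_of_gt hGpos)] at this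
  have := herr h hh
  linarith
end
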